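/- For all η ∈ (0,1/2), ν ∈ [0,1), and p_A1 ∈ (0,1) with η < 1 - p_A1 and η < p_A1, the reweighting factor Z = (1 - p_A1·(1-ν)) / ((1-ν)(1 - p_A1)) satisfies (η + (1-η)ν) / ((1-η)(1-ν)) < Z < (1-η + η·ν) / (η(1-ν)). -/
import Mathlib

theorem reweighting_factor_in_valid_interval
    (η ν pA1 : ℝ)
    (hη0 : 0 < η) (hη1 : η < 1/2)
    (hν0 : 0 ≤ ν) (hν1 : ν < 1)
    (hp0 : 0 < pA1) (hp1 : pA1 < 1)
    (hlt1 : η < 1 - pA1) (hlt2 : η < pA1) :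
    (η + (1 - η) * ν) / ((1 - η) * (1 - ν))
      < (1 - pA1 * (1 - ν)) / ((1 - ν) * (1 - pA1)) ∧
    (1 - pA1 * (1 - ν)) / ((1 - ν) * (1 - pA1))
      < (1 - η + η * ν) / (η * (1 - ν)) := by
  have hν : 0 < 1 - ν := by linarith
  have hp : 0 < 1 - pA1 := by linarith
  have he : 0 < 1 - η := by linarith
  constructor
  · rw [div_lt_div_iff₀ (by positivity) (by positivity)]
    nlinarith [mul_pos hν (mul_pos (by linarith : (0:ℝ) < 1 - 2*η) hp),
      mul_nonneg hν0 (by linarith : (0:ℝ) ≤ pA1 - η)]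
  · rw [div_lt_div_iff₀ (by positivity) (by positivity)]
    nlinarith [mul_pos hν (mul_pos hη0 hp), mul_nonneg hν0 (by linarith : (0:ℝ) ≤ 1 - pA1 - η),
      mul_pos hν (mul_pos (by linarith : (0:ℝ) < 1 - 2*η) hp)]
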